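/- Let R be an invertible n×n real matrix, G an invertible b×b real matrix, Z an n×b real matrix, and X an n×p real matrix. Set H = R + ZGZᵀ, assume H, XᵀH⁻¹X, ZᵀR⁻¹Z + G⁻¹, and the mixed-model coefficient matrix C = [[XᵀR⁻¹X, XᵀR⁻¹Z],[ZᵀR⁻¹X, ZᵀR⁻¹Z + G⁻¹]] are invertible, and let W = [X Z] be the n×(p+b) matrix obtained by concatenating the columns of X and Z. Then H⁻¹ − H⁻¹X(XᵀH⁻¹X)⁻¹XᵀH⁻¹ = R⁻¹ − R⁻¹W C⁻¹ Wᵀ R⁻¹. -/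

import Mathlib

open Matrix

set_option maxHeartbeats 1000000 in
theorem stmt_7 {n b p : ℕ} (R : Matrix (Fin n) (Fin n) ℝ) (G : Matrix (Fin b) (Fin b) ℝ)
    (Z : Matrix (Fin n) (Fin b) ℝ) (X : Matrix (Fin n) (Fin p) ℝ)
    (hR : IsUnit R.det) (hG : IsUnit G.det)
    (H : Matrix (Fin n) (Fin n) ℝ) (hH : H = R + Z * G * Zᵀ)
    (C : Matrix (Fin p ⊕ Fin b) (Fin p ⊕ Fin b) ℝ)
    (hC : C = Matrix.fromBlocks (Xᵀ * R⁻¹ * X) (Xᵀ * R⁻¹ * Z)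
                (Zᵀ * R⁻¹ * X) (Zᵀ * R⁻¹ * Z + G⁻¹))
    (W : Matrix (Fin n) (Fin p ⊕ Fin b) ℝ) (hW : W = Matrix.fromCols X Z)
    (hHinv : IsUnit H.det) (hXHX : IsUnit (Xᵀ * H⁻¹ * X).det)
    (hD : IsUnit (Zᵀ * R⁻¹ * Z + G⁻¹).det) (hCinv : IsUnit C.det) :
    H⁻¹ - H⁻¹ * X * (Xᵀ * H⁻¹ * X)⁻¹ * Xᵀ * H⁻¹ = R⁻¹ - R⁻¹ * W * C⁻¹ * Wᵀ * R⁻¹ := by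
  have h1 : R * R⁻¹ = 1 := mul_nonsing_inv R hR
  have h2 : G * G⁻¹ = 1 := mul_nonsing_inv G hG
  have h3 : (Zᵀ * R⁻¹ * Z + G⁻¹) * (Zᵀ * R⁻¹ * Z + G⁻¹)⁻¹ = 1 := mul_nonsing_inv _ hD
  set Dv := (Zᵀ * R⁻¹ * Z + G⁻¹)⁻¹ with hDv
  have e3 : Zᵀ * R⁻¹ * Z * Dv = 1 - G⁻¹ * Dv := by
    rw [add_mul] at h3; exact eq_sub_of_add_eq h3
  have e4 : G * (Zᵀ * R⁻¹ * Z * Dv) = G - Dv := by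
    rw [e3, Matrix.mul_sub, Matrix.mul_one, ← Matrix.mul_assoc, h2, Matrix.one_mul]
  have e5 : Z * (G * (Zᵀ * R⁻¹ * Z * Dv)) * (Zᵀ * R⁻¹) = Z * (G - Dv) * (Zᵀ * R⁻¹) := by
    rw [e4]
  have hWood : H⁻¹ = R⁻¹ - R⁻¹ * Z * Dv * Zᵀ * R⁻¹ := by
    refine inv_eq_right_inv ?_
    rw [hH]
    calc (R + Z * G * Zᵀ) * (R⁻¹ - R⁻¹ * Z * Dv * Zᵀ * R⁻¹)
        = R * R⁻¹ - R * R⁻¹ * (Z * (Dv * (Zᵀ * R⁻¹)))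
          + (Z * (G * (Zᵀ * R⁻¹)) - Z * (G * (Zᵀ * R⁻¹ * Z * Dv)) * (Zᵀ * R⁻¹)) := by
          simp only [Matrix.mul_assoc, Matrix.mul_sub, Matrix.sub_mul, Matrix.add_mul,
            Matrix.mul_add]
          abel
      _ = 1 := by
          rw [h1, e5]
          simp only [Matrix.sub_mul, Matrix.mul_sub, Matrix.mul_assoc, Matrix.one_mul]
          abel
  haveI iD : Invertible (Zᵀ * R⁻¹ * Z + G⁻¹) := (Zᵀ * R⁻¹ * Z + G⁻¹).invertibleOfIsUnitDet hD
  have hIof : ⅟(Zᵀ * R⁻¹ * Z + G⁻¹) = Dv := invOf_eq_nonsing_inv _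
  have hSchur : (Xᵀ * R⁻¹ * X) - (Xᵀ * R⁻¹ * Z) * ⅟(Zᵀ * R⁻¹ * Z + G⁻¹) * (Zᵀ * R⁻¹ * X)
      = Xᵀ * H⁻¹ * X := by
    rw [hIof, hWood]
    simp only [Matrix.mul_sub, Matrix.sub_mul, Matrix.mul_assoc]
  haveI iS : Invertible ((Xᵀ * R⁻¹ * X) - (Xᵀ * R⁻¹ * Z) * ⅟(Zᵀ * R⁻¹ * Z + G⁻¹) * (Zᵀ * R⁻¹ * X)) := by
    rw [hSchur]; exact (Xᵀ * H⁻¹ * X).invertibleOfIsUnitDet hXHX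
  haveI iC : Invertible (fromBlocks (Xᵀ * R⁻¹ * X) (Xᵀ * R⁻¹ * Z)
      (Zᵀ * R⁻¹ * X) (Zᵀ * R⁻¹ * Z + G⁻¹)) := fromBlocks₂₂Invertible _ _ _ _
  have hiS : ⅟((Xᵀ * R⁻¹ * X) - (Xᵀ * R⁻¹ * Z) * ⅟(Zᵀ * R⁻¹ * Z + G⁻¹) * (Zᵀ * R⁻¹ * X))
      = (Xᵀ * H⁻¹ * X)⁻¹ := by
    rw [invOf_eq_nonsing_inv, hSchur]
  have hCi : C⁻¹ = fromBlocks ((Xᵀ * H⁻¹ * X)⁻¹)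
      (-((Xᵀ * H⁻¹ * X)⁻¹ * (Xᵀ * R⁻¹ * Z) * Dv))
      (-(Dv * (Zᵀ * R⁻¹ * X) * (Xᵀ * H⁻¹ * X)⁻¹))
      (Dv + Dv * (Zᵀ * R⁻¹ * X) * (Xᵀ * H⁻¹ * X)⁻¹ * (Xᵀ * R⁻¹ * Z) * Dv) := by
    rw [hC, ← invOf_eq_nonsing_inv, invOf_fromBlocks₂₂_eq, hiS, hIof]
  have hWCW : W * C⁻¹ * Wᵀ =
      (X * (Xᵀ * H⁻¹ * X)⁻¹ + Z * (-(Dv * (Zᵀ * R⁻¹ * X) * (Xᵀ * H⁻¹ * X)⁻¹))) * Xᵀ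
      + (X * (-((Xᵀ * H⁻¹ * X)⁻¹ * (Xᵀ * R⁻¹ * Z) * Dv))
          + Z * (Dv + Dv * (Zᵀ * R⁻¹ * X) * (Xᵀ * H⁻¹ * X)⁻¹ * (Xᵀ * R⁻¹ * Z) * Dv)) * Zᵀ := by
    rw [hW, hCi, transpose_fromCols, fromCols_mul_fromBlocks, fromCols_mul_fromRows]
  have hassoc : R⁻¹ * W * C⁻¹ * Wᵀ * R⁻¹ = R⁻¹ * (W * C⁻¹ * Wᵀ) * R⁻¹ := by
    simp only [Matrix.mul_assoc]
  rw [hassoc, hWCW, hWood]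
  simp only [Matrix.mul_add, Matrix.add_mul, Matrix.mul_sub, Matrix.sub_mul,
    Matrix.mul_neg, Matrix.neg_mul, Matrix.mul_assoc, neg_neg]
  abel
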